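/- Let m ≥ 1 and y ∈ ℝ^m. Define g : ℝ → ℝ by g(λ) = Σ_{i=1}^m max(y_i − λ, 0). Then g is continuous, nonincreasing, satisfies g(λ) → +∞ as λ → −∞ and g(λ) = 0 for λ ≥ max_i y_i, and there exists a unique λ* ∈ ℝ with g(λ*) = 1; moreover g is strictly decreasing at every λ with g(λ) > 0. -/

import Mathlib

open Filter Topology

/-- Properties of `g(λ) = ∑_i max(y_i − λ, 0)`: it is continuous, nonincreasing,
tends to `+∞` as `λ → −∞`, vanishes for `λ ≥ max_i y_i`, takes the value `1`
at a unique point, and is strictly decreasing wherever it is positive. -/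
theorem simplex_threshold_function_properties
    (m : ℕ) (hm : 1 ≤ m) (y : Fin m → ℝ) :
    Continuous (fun l : ℝ => ∑ i, max (y i - l) 0) ∧
    Antitone (fun l : ℝ => ∑ i, max (y i - l) 0) ∧
    Tendsto (fun l : ℝ => ∑ i, max (y i - l) 0) atBot atTop ∧
    (∀ l : ℝ, (∀ i, y i ≤ l) → ∑ i, max (y i - l) 0 = 0) ∧
    (∃! l : ℝ, ∑ i, max (y i - l) 0 = 1) ∧
    (∀ a b : ℝ, a < b → 0 < ∑ i, max (y i - a) 0 →
      ∑ i, max (y i - b) 0 < ∑ i, max (y i - a) 0) := by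
  set g : ℝ → ℝ := fun l => ∑ i, max (y i - l) 0 with hg
  have i0 : Fin m := ⟨0, hm⟩
  have hcont : Continuous g := by
    apply continuous_finset_sum
    intro i _
    exact (continuous_const.sub continuous_id).max continuous_const
  have hanti : Antitone g := by
    intro a b hab
    refine Finset.sum_le_sum fun i _ => max_le_max (by linarith) le_rfl
  have hstrict : ∀ a b : ℝ, a < b → 0 < g a → g b < g a := by
    intro a b hab hpos
    obtain ⟨i, -, hi⟩ : ∃ i ∈ Finset.univ, 0 < max (y i - a) 0 := by
      by_contra h
      push_neg at h
      have : g a ≤ 0 := Finset.sum_nonpos fun i hi => h i hi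
      linarith
    have hia : a < y i := by
      rcases lt_or_ge a (y i) with h | h
      · exact h
      · simp [max_eq_right (by linarith : y i - a ≤ 0)] at hi
    refine Finset.sum_lt_sum (fun j _ => max_le_max (by linarith) le_rfl) ⟨i, Finset.mem_univ i, ?_⟩
    have h1 : max (y i - a) 0 = y i - a := max_eq_left (by linarith)
    rw [h1]
    exact max_lt (by linarith) (by linarith)
  have htend : Tendsto g atBot atTop := by
    have hle : ∀ l, y i0 - l ≤ g l := by
      intro l
      calc y i0 - l ≤ max (y i0 - l) 0 := le_max_left _ _
        _ ≤ g l :=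
          Finset.single_le_sum (f := fun j => max (y j - l) 0)
            (fun j _ => le_max_right _ _) (Finset.mem_univ i0)
    refine tendsto_atTop_mono hle ?_
    have : Tendsto (fun l : ℝ => -l) atBot atTop := tendsto_neg_atBot_atTop
    have := tendsto_atTop_add_const_left atBot (y i0) this
    exact this.congr (fun l => (sub_eq_add_neg _ _).symm)
  have hzero : ∀ l : ℝ, (∀ i, y i ≤ l) → g l = 0 := by
    intro l hl
    refine Finset.sum_eq_zero fun i _ => max_eq_right (by linarith [hl i])
  refine ⟨hcont, hanti, htend, hzero, ?_, hstrict⟩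
  -- existence and uniqueness
  obtain ⟨a, ha⟩ := (htend.eventually_ge_atTop 1).exists
  have hne : Finset.univ.Nonempty := ⟨i0, Finset.mem_univ i0⟩
  obtain ⟨b, -, hb⟩ := Finset.exists_max_image Finset.univ y hne
  have hab : min a (y b) ≤ y b := min_le_right _ _
  have hga : 1 ≤ g (min a (y b)) := le_trans ha (hanti (min_le_left _ _))
  have hgb : g (y b) = 0 := hzero (y b) (fun i => hb i (Finset.mem_univ i))
  have hmem : (1 : ℝ) ∈ Set.Icc (g (y b)) (g (min a (y b))) := ⟨by rw [hgb]; norm_num, hga⟩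
  obtain ⟨l, -, hl⟩ := intermediate_value_Icc' hab hcont.continuousOn hmem
  refine ⟨l, hl, fun l' hl'0 => ?_⟩
  have hl' : g l' = 1 := hl'0
  by_contra hne'
  rcases lt_or_gt_of_ne hne' with h | h
  · have := hstrict l' l h (by rw [hl']; norm_num)
    rw [hl, hl'] at this; linarith
  · have := hstrict l l' h (by rw [hl]; norm_num)
    rw [hl, hl'] at this; linarith
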